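/- For every λ < 0, ∫_0^1 t · (|λ|/√(2π t (1−t)³)) · exp(−λ² t /(2(1−t))) dt = 1 − |λ| · exp(λ²/2) · ∫_{|λ|}^∞ exp(−s²/2) ds. -/

import Mathlib

open MeasureTheory Real

open Set Filter in

lemma tail_int {c : ℝ} (hc : 0 < c) (b : ℝ) :
    ∫ t in Ioi b, t * Real.exp (-(c * t ^ 2)) = Real.exp (-(c * b ^ 2)) / (2 * c) := by
  have h : ∀ x ∈ Ici b, HasDerivAt (fun t => -(1 / (2 * c)) * Real.exp (-(c * t ^ 2)))
      (x * Real.exp (-(c * x ^ 2))) x := by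
    intro x _
    have h1 : HasDerivAt (fun t : ℝ => -(c * t ^ 2)) (-(c * (2 * x))) x := by
      have := ((hasDerivAt_pow 2 x).const_mul c).neg
      simpa [mul_comm, Pi.neg_def] using this
    have h2 := (h1.exp).const_mul (-(1 / (2 * c)))
    convert h2 using 1
    · rfl
    · rfl
    field_simp
  have hint : IntegrableOn (fun t => t * Real.exp (-(c * t ^ 2))) (Ioi b) := by
    have := integrable_mul_exp_neg_mul_sq hc
    exact (this.integrableOn).congr_fun (fun x _ => by ring_nf) measurableSet_Ioi
  have htend : Tendsto (fun t => -(1 / (2 * c)) * Real.exp (-(c * t ^ 2))) atTop (nhds 0) := by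
    rw [show (0:ℝ) = -(1/(2*c)) * 0 by ring]
    apply Tendsto.const_mul
    have h3 : Tendsto (fun t : ℝ => c * t ^ 2) atTop atTop :=
      (tendsto_pow_atTop (by norm_num)).const_mul_atTop hc
    simpa [Function.comp_def] using tendsto_exp_atBot.comp (tendsto_neg_atBot_iff.mpr h3)
  have := integral_Ioi_of_hasDerivAt_of_tendsto' h hint htend
  rw [this]
  field_simp
  ring


open Set Filter in
lemma key_int {a : ℝ} (ha : 0 < a) :
    ∫ s in Ioi (0:ℝ), Real.exp (-s ^ 2 / 2) / (s ^ 2 + a ^ 2)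
      = Real.sqrt (2 * π) / (2 * a) * Real.exp (a ^ 2 / 2)
          * ∫ t in Ioi a, Real.exp (-t ^ 2 / 2) := by
  have ha2 : (0:ℝ) < a ^ 2 := by positivity
  set F : ℝ → ℝ → ℝ := fun s t => t * Real.exp (-((s ^ 2 + a ^ 2) / (2 * a ^ 2) * t ^ 2)) with hF
  have hmem : ∀ᵐ p ∂((volume.restrict (Ioi (0:ℝ))).prod (volume.restrict (Ioi a))),
      p ∈ (Ioi (0:ℝ)) ×ˢ (Ioi a) := by
    rw [Measure.prod_restrict]
    exact ae_restrict_mem (measurableSet_Ioi.prod measurableSet_Ioi)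
  have hFint : Integrable (Function.uncurry F)
      ((volume.restrict (Ioi (0:ℝ))).prod (volume.restrict (Ioi a))) := by
    have hmeas : AEStronglyMeasurable (Function.uncurry F)
        ((volume.restrict (Ioi (0:ℝ))).prod (volume.restrict (Ioi a))) :=
      Continuous.aestronglyMeasurable (by fun_prop)
    have hg : Integrable (fun p : ℝ × ℝ =>
        Real.exp (-((1:ℝ)/2) * p.1 ^ 2) * (p.2 * Real.exp (-((1:ℝ)/2) * p.2 ^ 2)))
        ((volume.restrict (Ioi (0:ℝ))).prod (volume.restrict (Ioi a))) :=
      ((integrable_exp_neg_mul_sq (by norm_num : (0:ℝ) < 1/2)).restrict).mul_prod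
        ((integrable_mul_exp_neg_mul_sq (by norm_num : (0:ℝ) < 1/2)).restrict)
    refine hg.mono' hmeas ?_
    filter_upwards [hmem] with p hp
    obtain ⟨hs, ht⟩ := hp
    set s := p.1; set t := p.2
    have hs0 : 0 < s := hs
    have ht0 : 0 < t := lt_trans ha ht
    have hFv : Function.uncurry F p = t * Real.exp (-((s ^ 2 + a ^ 2) / (2 * a ^ 2) * t ^ 2)) := rfl
    rw [Real.norm_eq_abs, hFv, abs_of_nonneg (by positivity)]
    rw [show -((s ^ 2 + a ^ 2) / (2 * a ^ 2) * t ^ 2)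
          = -(t ^ 2 / a ^ 2 * (s ^ 2 / 2)) + -((1:ℝ)/2) * t ^ 2 by field_simp; ring,
      Real.exp_add]
    have h1 : Real.exp (-(t ^ 2 / a ^ 2 * (s ^ 2 / 2))) ≤ Real.exp (-((1:ℝ)/2) * s ^ 2) := by
      apply Real.exp_le_exp.mpr
      have h2 : (1:ℝ) ≤ t ^ 2 / a ^ 2 := by
        rw [le_div_iff₀ ha2]
        nlinarith [(Set.mem_Ioi.mp ht).le]
      nlinarith [sq_nonneg s]
    have := mul_le_mul_of_nonneg_right h1 (Real.exp_pos (-((1:ℝ)/2) * t ^ 2)).le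
    nlinarith [Real.exp_pos (-((1:ℝ)/2) * t ^ 2), Real.exp_pos (-((1:ℝ)/2) * s ^ 2)]
  have hswap := integral_integral_swap hFint
  -- LHS of swap: ∫ s, ∫ t, F s t
  have hinner1 : ∀ s ∈ Ioi (0:ℝ), (∫ t in Ioi a, F s t)
      = a ^ 2 * Real.exp (-(a ^ 2 / 2)) * (Real.exp (-s ^ 2 / 2) / (s ^ 2 + a ^ 2)) := by
    intro s _
    have hc : (0:ℝ) < (s ^ 2 + a ^ 2) / (2 * a ^ 2) := by positivity
    have := tail_int hc a
    rw [hF]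
    simp only
    rw [this]
    rw [show -((s ^ 2 + a ^ 2) / (2 * a ^ 2) * a ^ 2) = -(a ^ 2 / 2) + -s ^ 2 / 2 by
      field_simp; ring, Real.exp_add]
    have hsa : s ^ 2 + a ^ 2 ≠ 0 := by positivity
    field_simp
  have hinner2 : ∀ t ∈ Ioi a, (∫ s in Ioi (0:ℝ), F s t)
      = a * Real.sqrt (2 * π) / 2 * Real.exp (-t ^ 2 / 2) := by
    intro t ht
    have ht0 : 0 < t := lt_trans ha ht
    have hsplit : ∀ s : ℝ, F s t
        = t * Real.exp (-(1:ℝ)/2 * t ^ 2) * Real.exp (-(t ^ 2 / (2 * a ^ 2)) * s ^ 2) := by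
      intro s
      rw [hF]
      simp only
      rw [show -((s ^ 2 + a ^ 2) / (2 * a ^ 2) * t ^ 2)
            = -(1:ℝ)/2 * t ^ 2 + -(t ^ 2 / (2 * a ^ 2)) * s ^ 2 by field_simp; ring,
        Real.exp_add]
      ring
    simp_rw [hsplit]
    rw [integral_const_mul _ _, integral_gaussian_Ioi]
    have : Real.sqrt (π / (t ^ 2 / (2 * a ^ 2))) = Real.sqrt (2 * π) * a / t := by
      rw [show π / (t ^ 2 / (2 * a ^ 2)) = (Real.sqrt (2 * π) * a / t) ^ 2 by
        rw [div_pow, mul_pow, Real.sq_sqrt (by positivity)]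
        field_simp]
      exact Real.sqrt_sq (by positivity)
    rw [this]
    field_simp
  rw [setIntegral_congr_fun measurableSet_Ioi hinner1,
      setIntegral_congr_fun measurableSet_Ioi hinner2] at hswap
  rw [integral_const_mul, integral_const_mul] at hswap
  have hexp : Real.exp (-(a ^ 2 / 2)) ≠ 0 := Real.exp_ne_zero _
  have : (∫ s in Ioi (0:ℝ), Real.exp (-s ^ 2 / 2) / (s ^ 2 + a ^ 2))
      = (a * Real.sqrt (2 * π) / 2 * ∫ t in Ioi a, Real.exp (-t ^ 2 / 2))
        / (a ^ 2 * Real.exp (-(a ^ 2 / 2))) := by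
    rw [← hswap]; field_simp
  rw [this, Real.exp_neg]
  rw [show a ^ 2 / 2 = -(-(a^2/2)) by ring] at *
  field_simp [Real.exp_ne_zero]


open Set Filter in
lemma cov_int {a : ℝ} (ha : 0 < a) :
    ∫ t in Ioo (0:ℝ) 1,
        t * (a / Real.sqrt (2 * π * t * (1 - t) ^ 3) * Real.exp (-a ^ 2 * t / (2 * (1 - t))))
      = ∫ s in Ioi (0:ℝ), 2 * s ^ 2 / ((s ^ 2 + a ^ 2) * Real.sqrt (2 * π))
          * Real.exp (-s ^ 2 / 2) := by
  have ha2 : (0:ℝ) < a ^ 2 := by positivity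
  set f : ℝ → ℝ := fun s => s ^ 2 / (s ^ 2 + a ^ 2) with hf
  set f' : ℝ → ℝ := fun s => 2 * s * a ^ 2 / (s ^ 2 + a ^ 2) ^ 2 with hf'
  have hderiv : ∀ x ∈ Ioi (0:ℝ), HasDerivWithinAt f (f' x) (Ioi 0) x := by
    intro x _
    have hden : x ^ 2 + a ^ 2 ≠ 0 := by positivity
    have h1 : HasDerivAt (fun s : ℝ => s ^ 2) (2 * x) x := by
      simpa using hasDerivAt_pow 2 x
    have h2 : HasDerivAt (fun s : ℝ => s ^ 2 + a ^ 2) (2 * x) x := h1.add_const _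
    have := h1.div h2 hden
    refine HasDerivAt.hasDerivWithinAt ?_
    convert this using 1
    · rfl
    · rfl
    rw [hf']
    simp only
    rw [div_eq_div_iff (pow_ne_zero 2 hden) (pow_ne_zero 2 hden)]
    ring
  have hinj : InjOn f (Ioi 0) := by
    intro x hx y hy hxy
    have hx0 : (0:ℝ) < x := hx
    have hy0 : (0:ℝ) < y := hy
    have hdx : x ^ 2 + a ^ 2 ≠ 0 := by positivity
    have hdy : y ^ 2 + a ^ 2 ≠ 0 := by positivity
    have hsq : x ^ 2 = y ^ 2 := by
      rw [hf] at hxy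
      simp only at hxy
      rw [div_eq_div_iff (by positivity) (by positivity)] at hxy
      nlinarith
    calc x = Real.sqrt (x ^ 2) := (Real.sqrt_sq hx0.le).symm
      _ = Real.sqrt (y ^ 2) := by rw [hsq]
      _ = y := Real.sqrt_sq hy0.le
  have himg : f '' Ioi 0 = Ioo (0:ℝ) 1 := by
    ext t
    constructor
    · rintro ⟨s, hs, rfl⟩
      have hs0 : (0:ℝ) < s := hs
      constructor
      · exact div_pos (by positivity) (by positivity)
      · rw [div_lt_one (by positivity)]
        nlinarith
    · rintro ⟨ht0, ht1⟩
      have h1t : (0:ℝ) < 1 - t := by linarith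
      refine ⟨a * Real.sqrt (t / (1 - t)), ?_, ?_⟩
      · have : 0 < Real.sqrt (t / (1 - t)) := Real.sqrt_pos.mpr (by positivity)
        exact mul_pos ha this
      · have hsq : (a * Real.sqrt (t / (1 - t))) ^ 2 = a ^ 2 * (t / (1 - t)) := by
          rw [mul_pow, Real.sq_sqrt (by positivity)]
        rw [hf]
        simp only
        rw [hsq]
        field_simp
        ring
  rw [← himg, integral_image_eq_integral_abs_deriv_smul measurableSet_Ioi hderiv hinj]
  refine setIntegral_congr_fun measurableSet_Ioi ?_
  intro s hs
  have hs0 : (0:ℝ) < s := hs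
  have hden : (0:ℝ) < s ^ 2 + a ^ 2 := by positivity
  have h2pi : (0:ℝ) < 2 * π := by positivity
  have h1t : 1 - f s = a ^ 2 / (s ^ 2 + a ^ 2) := by
    rw [hf]; simp only; field_simp
    ring
  have hfs : f s = s ^ 2 / (s ^ 2 + a ^ 2) := rfl
  have hsqrt : Real.sqrt (2 * π * f s * (1 - f s) ^ 3)
      = Real.sqrt (2 * π) * (s * a ^ 3 / (s ^ 2 + a ^ 2) ^ 2) := by
    rw [h1t, hfs, show 2 * π * (s ^ 2 / (s ^ 2 + a ^ 2)) * (a ^ 2 / (s ^ 2 + a ^ 2)) ^ 3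
        = (Real.sqrt (2 * π) * (s * a ^ 3 / (s ^ 2 + a ^ 2) ^ 2)) ^ 2 by
      rw [mul_pow, Real.sq_sqrt h2pi.le]; field_simp]
    exact Real.sqrt_sq (by positivity)
  have hexp : -a ^ 2 * f s / (2 * (1 - f s)) = -s ^ 2 / 2 := by
    rw [h1t, hfs]
    field_simp
  have habs : |f' s| = 2 * s * a ^ 2 / (s ^ 2 + a ^ 2) ^ 2 := by
    rw [hf']; exact abs_of_pos (by positivity)
  simp only [smul_eq_mul]
  rw [habs, hexp, hsqrt, hfs]
  have hsqrt2pi : Real.sqrt (2 * π) ≠ 0 := by positivity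
  field_simp


open Set Filter in
/-- For every `λ < 0`,
`∫_0^1 t · (|λ|/√(2π t (1−t)³)) · exp(−λ² t/(2(1−t))) dt
  = 1 − |λ| · exp(λ²/2) · ∫_{|λ|}^∞ exp(−s²/2) ds`. -/
theorem mean_of_Z (lam : ℝ) (hlam : lam < 0) :
    (∫ t in Set.Ioo (0:ℝ) 1,
        t * (|lam| / Real.sqrt (2 * Real.pi * t * (1 - t) ^ 3)
          * Real.exp (-lam ^ 2 * t / (2 * (1 - t)))))
      = 1 - |lam| * Real.exp (lam ^ 2 / 2) * ∫ s in Set.Ioi |lam|, Real.exp (-s ^ 2 / 2) := by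
  set a : ℝ := |lam| with ha'
  have ha : 0 < a := abs_pos.mpr hlam.ne
  have hlamsq : lam ^ 2 = a ^ 2 := (sq_abs lam).symm
  rw [hlamsq]
  rw [cov_int ha]
  have hs2pi : (0:ℝ) < Real.sqrt (2 * π) := Real.sqrt_pos.mpr (by positivity)
  -- split integrand
  have hsplit : ∀ s : ℝ, 2 * s ^ 2 / ((s ^ 2 + a ^ 2) * Real.sqrt (2 * π)) * Real.exp (-s ^ 2 / 2)
      = 2 / Real.sqrt (2 * π) * Real.exp (-s ^ 2 / 2)
        - 2 * a ^ 2 / Real.sqrt (2 * π) * (Real.exp (-s ^ 2 / 2) / (s ^ 2 + a ^ 2)) := by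
    intro s
    have hden : (0:ℝ) < s ^ 2 + a ^ 2 := by positivity
    field_simp
    ring
  simp_rw [hsplit]
  have hint1 : IntegrableOn (fun s : ℝ => 2 / Real.sqrt (2 * π) * Real.exp (-s ^ 2 / 2))
      (Ioi 0) := by
    refine (((integrable_exp_neg_mul_sq (by norm_num : (0:ℝ) < 1/2)).const_mul
      (2 / Real.sqrt (2 * π))).integrableOn).congr_fun (fun x _ => ?_) measurableSet_Ioi
    dsimp only
    rw [show -(1/2:ℝ) * x ^ 2 = -x ^ 2 / 2 by ring]
  have hintK : IntegrableOn (fun s : ℝ => Real.exp (-s ^ 2 / 2) / (s ^ 2 + a ^ 2)) (Ioi 0) := by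
    refine Integrable.mono'
      (((integrable_exp_neg_mul_sq (by norm_num : (0:ℝ) < 1/2)).const_mul
        ((a ^ 2)⁻¹)).integrableOn)
      (Continuous.aestronglyMeasurable (by fun_prop (disch := intro s; positivity)) |>.restrict)
      ?_
    filter_upwards with s
    have hden : (0:ℝ) < s ^ 2 + a ^ 2 := by positivity
    rw [Real.norm_eq_abs, abs_of_nonneg (by positivity)]
    rw [show -(1/2:ℝ) * s ^ 2 = -s ^ 2 / 2 by ring]
    rw [div_le_iff₀ hden, mul_comm ((a ^ 2)⁻¹) _, mul_assoc]
    have h1 : (1:ℝ) ≤ (a ^ 2)⁻¹ * (s ^ 2 + a ^ 2) := by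
      rw [inv_mul_eq_div, le_div_iff₀ (by positivity)]
      nlinarith [sq_nonneg s]
    nlinarith [Real.exp_pos (-s ^ 2 / 2)]
  have hint2 : IntegrableOn (fun s : ℝ => 2 * a ^ 2 / Real.sqrt (2 * π)
      * (Real.exp (-s ^ 2 / 2) / (s ^ 2 + a ^ 2))) (Ioi 0) :=
    hintK.const_mul _
  rw [integral_sub hint1 hint2, integral_const_mul, integral_const_mul]
  have hg : ∫ s in Ioi (0:ℝ), Real.exp (-s ^ 2 / 2) = Real.sqrt (2 * π) / 2 := by
    rw [show (fun s : ℝ => Real.exp (-s ^ 2 / 2)) = fun s : ℝ => Real.exp (-(1/2) * s ^ 2) by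
      funext s; rw [show -(1/2:ℝ) * s ^ 2 = -s ^ 2 / 2 by ring]]
    rw [integral_gaussian_Ioi, show π / (1/2:ℝ) = 2 * π by ring]
  rw [hg, key_int ha]
  have hne : Real.sqrt (2 * π) ≠ 0 := hs2pi.ne'
  field_simp
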